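/- For real r with 0 < r, the limit as h → 0⁺ of K_r^{(h)}(λ) = exp(−i ∫₀^∞ (sin(pλ)/p) · sinh((p/2)(π/h − r)) / (cosh(p/2) sinh(pπ/(2h))) dp) equals Γ(−iλ/2 + (r+3)/4)Γ(iλ/2 + (r+1)/4) / (Γ(iλ/2 + (r+3)/4)Γ(−iλ/2 + (r+1)/4)), where Γ is the Euler gamma function. -/

import Mathlib

open Real Complex Filter MeasureTheory
open Set


lemma conj_div_exp {z : ℂ} (hz : 0 < z.re) :
    (starRingEnd ℂ) z / z = Complex.exp (((-2 * Real.arctan (z.im / z.re) : ℝ) : ℂ) * Complex.I) := by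
  set t : ℝ := z.im / z.re with ht
  have hc : z.re ≠ 0 := ne_of_gt hz
  have hz0 : z ≠ 0 := fun h => by simp [h] at hz
  set u : ℝ := Real.sqrt (1 + t^2) with hu
  have ht2 : (0:ℝ) < 1 + t^2 := by positivity
  have hu2 : u^2 = 1 + t^2 := Real.sq_sqrt (by positivity)
  have hu0 : u ≠ 0 := by rw [hu]; positivity
  have hcos : Real.cos (Real.arctan t) = 1 / u := by rw [Real.cos_arctan]
  have hsin : Real.sin (Real.arctan t) = t / u := by rw [Real.sin_arctan]
  have hexp : Complex.exp (((-2 * Real.arctan t : ℝ) : ℂ) * Complex.I)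
      = (((1 - t^2)/(1 + t^2) : ℝ) : ℂ) + ((-(2 * t/(1 + t^2)) : ℝ) : ℂ) * Complex.I := by
    rw [Complex.exp_mul_I, ← Complex.ofReal_cos, ← Complex.ofReal_sin]
    congr 2
    · rw [show (-2 * Real.arctan t) = -(2 * Real.arctan t) by ring, Real.cos_neg,
        Real.cos_two_mul, hcos, div_pow, one_pow, hu2]
      field_simp
      ring
    · rw [show (-2 * Real.arctan t) = -(2 * Real.arctan t) by ring, Real.sin_neg,
        Real.sin_two_mul, hsin, hcos]
      apply congrArg
      rw [← hu2]
      field_simp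
  rw [hexp, div_eq_iff hz0]
  apply Complex.ext
  · simp only [Complex.conj_re, Complex.add_re, Complex.mul_re, Complex.ofReal_re,
      Complex.ofReal_im, Complex.mul_im, Complex.I_re, Complex.I_im, Complex.add_im,
      mul_zero, mul_one, zero_mul, sub_zero, zero_sub, zero_add, add_zero]
    rw [ht]
    field_simp
    ring
  · simp only [Complex.conj_im, Complex.add_im, Complex.mul_re, Complex.ofReal_re,
      Complex.ofReal_im, Complex.mul_im, Complex.I_re, Complex.I_im, Complex.add_re,
      mul_zero, mul_one, zero_mul, sub_zero, zero_sub, zero_add, add_zero]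
    rw [ht]
    field_simp
    ring

lemma laplace_cos {c : ℝ} (hc : 0 < c) (l : ℝ) :
    ∫ p in Set.Ioi (0:ℝ), Real.exp (-(c*p)) * Real.cos (p*l) = c / (c^2 + l^2) := by
  have hden : (0:ℝ) < c^2 + l^2 := by positivity
  set G : ℝ → ℝ := fun p => Real.exp (-(c*p)) * (-c * Real.cos (p*l) + l * Real.sin (p*l)) / (c^2 + l^2) with hG
  have hderiv : ∀ p : ℝ, HasDerivAt G (Real.exp (-(c*p)) * Real.cos (p*l)) p := by
    intro p
    have h1 : HasDerivAt (fun p : ℝ => Real.exp (-(c*p))) (-c * Real.exp (-(c*p))) p := by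
      have := (Real.hasDerivAt_exp (-(c*p))).comp p (((hasDerivAt_id p).const_mul c).neg)
      simpa [mul_comm, Function.comp_def] using this
    have h2 : HasDerivAt (fun p : ℝ => -c * Real.cos (p*l) + l * Real.sin (p*l))
        (-c * (-(Real.sin (p*l)) * l) + l * (Real.cos (p*l) * l)) p := by
      have hc1 : HasDerivAt (fun p : ℝ => Real.cos (p*l)) (-(Real.sin (p*l)) * l) p :=
        by simpa [Function.comp_def] using (Real.hasDerivAt_cos (p*l)).comp p ((hasDerivAt_id p).mul_const l)
      have hs1 : HasDerivAt (fun p : ℝ => Real.sin (p*l)) (Real.cos (p*l) * l) p :=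
        by simpa [Function.comp_def] using (Real.hasDerivAt_sin (p*l)).comp p ((hasDerivAt_id p).mul_const l)
      exact (hc1.const_mul (-c)).add (hs1.const_mul l)
    have := (h1.mul h2).div_const (c^2 + l^2)
    convert this using 1
    all_goals try rfl
    field_simp
    ring
  have hint : IntegrableOn (fun p => Real.exp (-(c*p)) * Real.cos (p*l)) (Ioi (0:ℝ)) := by
    have h0 : IntegrableOn (fun p => Real.exp (-(c*p))) (Ioi (0:ℝ)) := by
      simpa [neg_mul] using exp_neg_integrableOn_Ioi 0 hc
    refine h0.mono' ?_ ?_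
    · exact (((Real.continuous_exp.comp (continuous_const.mul continuous_id).neg)).mul
        (Real.continuous_cos.comp (continuous_id.mul continuous_const))).aestronglyMeasurable
    · filter_upwards with p
      rw [norm_mul, Real.norm_eq_abs, Real.norm_eq_abs, abs_of_pos (Real.exp_pos _)]
      nlinarith [abs_cos_le_one (p*l), Real.exp_pos (-(c*p)), abs_nonneg (Real.cos (p*l))]
  have hlim : Tendsto G atTop (nhds 0) := by
    apply squeeze_zero_norm (a := fun p => Real.exp (-(c*p)) * ((c + |l|) / (c^2 + l^2)))
    · intro p
      rw [hG]
      simp only [Real.norm_eq_abs, abs_div, abs_mul, abs_of_pos (Real.exp_pos _),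
        abs_of_pos hden]
      rw [div_le_iff₀ hden, mul_assoc, div_mul_cancel₀ _ hden.ne']
      have : |(-c * Real.cos (p*l) + l * Real.sin (p*l))| ≤ c + |l| := by
        calc |(-c * Real.cos (p*l) + l * Real.sin (p*l))|
            ≤ |(-c) * Real.cos (p*l)| + |l * Real.sin (p*l)| := abs_add_le _ _
          _ ≤ c + |l| := by
              rw [abs_mul, abs_mul, abs_neg, abs_of_pos hc]
              have := abs_cos_le_one (p*l); have := abs_sin_le_one (p*l)
              nlinarith [abs_nonneg l, hc.le]
      exact mul_le_mul_of_nonneg_left this (Real.exp_pos _).le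
    · have : Tendsto (fun p : ℝ => Real.exp (-(c*p))) atTop (nhds 0) := by
        apply Real.tendsto_exp_atBot.comp
        exact tendsto_neg_atBot_iff.mpr ((tendsto_const_mul_atTop_of_pos hc).2 tendsto_id)
      simpa using this.mul_const ((c + |l|) / (c^2 + l^2))
  have := integral_Ioi_of_hasDerivAt_of_tendsto' (f := G)
    (f' := fun p => Real.exp (-(c*p)) * Real.cos (p*l)) (fun x _ => hderiv x) hint hlim
  rw [this, hG]
  simp
  field_simp

lemma sin_div_meas (c x : ℝ) :
    AEStronglyMeasurable (fun p : ℝ => Real.sin (p*x)/p * Real.exp (-(c*p)))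
      (volume.restrict (Set.Ioi 0)) :=
  (((Real.measurable_sin.comp (measurable_id.mul_const x)).div measurable_id).mul
    (Real.measurable_exp.comp (measurable_const.mul measurable_id).neg)).aestronglyMeasurable

lemma sin_div_int {c : ℝ} (hc : 0 < c) (x : ℝ) :
    IntegrableOn (fun p : ℝ => Real.sin (p*x)/p * Real.exp (-(c*p))) (Set.Ioi 0) := by
  have h0 : IntegrableOn (fun p : ℝ => |x| * Real.exp (-(c*p))) (Ioi (0:ℝ)) := by
    have := exp_neg_integrableOn_Ioi 0 hc
    simpa [neg_mul, IntegrableOn] using this.const_mul |x|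
  refine h0.mono' (sin_div_meas c x) ?_
  filter_upwards [ae_restrict_mem measurableSet_Ioi] with p hp
  rw [norm_mul, Real.norm_eq_abs, Real.norm_eq_abs, abs_of_pos (Real.exp_pos _), abs_div,
    abs_of_pos (show (0:ℝ) < p from hp)]
  have h1 : |Real.sin (p*x)| ≤ |p*x| := Real.abs_sin_le_abs
  rw [abs_mul, abs_of_pos (show (0:ℝ) < p from hp)] at h1
  have : |Real.sin (p*x)| / p ≤ |x| := by
    rw [div_le_iff₀ (hp : (0:ℝ) < p)]; linarith [h1]
  exact mul_le_mul_of_nonneg_right this (Real.exp_pos _).le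

lemma laplace_sin_div {c : ℝ} (hc : 0 < c) (l : ℝ) :
    ∫ p in Set.Ioi (0:ℝ), Real.sin (p*l)/p * Real.exp (-(c*p)) = Real.arctan (l/c) := by
  set F : ℝ → ℝ := fun x => ∫ p in Set.Ioi (0:ℝ), Real.sin (p*x)/p * Real.exp (-(c*p)) with hF
  have key : ∀ x : ℝ, HasDerivAt F (c/(c^2+x^2)) x := by
    intro x
    have main := hasDerivAt_integral_of_dominated_loc_of_deriv_le (s := Metric.ball x 1) (x₀ := x)
      (F := fun x p => Real.sin (p*x)/p * Real.exp (-(c*p)))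
      (F' := fun x p => Real.cos (p*x) * Real.exp (-(c*p)))
      (bound := fun p => Real.exp (-(c*p))) (μ := volume.restrict (Set.Ioi 0))
      (Metric.ball_mem_nhds x one_pos) (Eventually.of_forall fun y => sin_div_meas c y) (sin_div_int hc x)
      ((Real.measurable_cos.comp (measurable_id.mul_const x)).mul
        (Real.measurable_exp.comp (measurable_const.mul measurable_id).neg)).aestronglyMeasurable
      ?_ ?_ ?_
    · have heq : (∫ p in Set.Ioi (0:ℝ), Real.cos (p*x) * Real.exp (-(c*p))) = c/(c^2+x^2) := by
        rw [← laplace_cos hc x]; congr 1; ext p; ring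
      rw [← heq]; exact main.2
    · filter_upwards with p; intro y _
      rw [norm_mul, Real.norm_eq_abs, Real.norm_eq_abs, abs_of_pos (Real.exp_pos _)]
      nlinarith [abs_cos_le_one (p*y), Real.exp_pos (-(c*p)), abs_nonneg (Real.cos (p*y))]
    · simpa [neg_mul, IntegrableOn] using exp_neg_integrableOn_Ioi 0 hc
    · filter_upwards [ae_restrict_mem measurableSet_Ioi] with p hp
      intro y _
      have hp0 : (p:ℝ) ≠ 0 := ne_of_gt hp
      have h1 : HasDerivAt (fun y : ℝ => Real.sin (p*y)) (Real.cos (p*y) * p) y :=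
        (Real.hasDerivAt_sin (p*y)).comp y ((hasDerivAt_id y).const_mul p |>.congr_deriv (by ring))
      have := (h1.div_const p).mul_const (Real.exp (-(c*p)))
      convert this using 1
      all_goals try rfl
      field_simp
  have harc : ∀ x : ℝ, HasDerivAt (fun x : ℝ => Real.arctan (x/c)) (c/(c^2+x^2)) x := by
    intro x
    have := (Real.hasDerivAt_arctan (x/c)).comp x ((hasDerivAt_id x).div_const c)
    convert this using 1
    all_goals try rfl
    field_simp
  have hdiff : ∀ x : ℝ, HasDerivAt (fun x => F x - Real.arctan (x/c)) 0 x := by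
    intro x
    simpa [Pi.sub_def] using (key x).sub (harc x)
  have hconst : F l - Real.arctan (l/c) = F 0 - Real.arctan (0/c) := by
    apply is_const_of_deriv_eq_zero (f := fun x => F x - Real.arctan (x/c))
    · exact fun x => (hdiff x).differentiableAt
    · exact fun x => (hdiff x).deriv
  have hF0 : F 0 = 0 := by
    rw [hF]; simp
  show F l = Real.arctan (l/c)
  rw [show F l = (F l - Real.arctan (l/c)) + Real.arctan (l/c) by ring, hconst, hF0]
  simp

lemma series_to_integral {r : ℝ} (hr : 0 < r) (lam : ℝ) :
    Tendsto (fun n : ℕ => ∑ k ∈ Finset.range n,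
        (-1:ℝ)^k * (2 * Real.arctan (lam/((r+1)/2 + k)))) atTop
      (nhds (∫ p in Set.Ioi (0:ℝ),
        Real.sin (p*lam)/p * (Real.exp (-(r*p/2)) / Real.cosh (p/2)))) := by
  set s : ℝ := (r+1)/2 with hs
  have hs0 : 0 < s := by rw [hs]; linarith
  set Fn : ℕ → ℝ → ℝ := fun n p => ∑ k ∈ Finset.range n,
    (-1:ℝ)^k * (2 * (Real.sin (p*lam)/p * Real.exp (-((s + k)*p)))) with hFn
  -- each (s+k) > 0
  have hsk : ∀ k : ℕ, (0:ℝ) < s + k := fun k => by positivity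
  -- integral of Fn
  have hFnint : ∀ n, ∫ p in Set.Ioi (0:ℝ), Fn n p
      = ∑ k ∈ Finset.range n, (-1:ℝ)^k * (2 * Real.arctan (lam/(s + k))) := by
    intro n
    rw [hFn]
    rw [integral_finset_sum]
    · refine Finset.sum_congr rfl fun k _ => ?_
      rw [integral_const_mul, integral_const_mul, laplace_sin_div (hsk k) lam]
    · intro k _
      exact (((sin_div_int (hsk k) lam).congr_fun (fun p _ => by ring)
        measurableSet_Ioi).const_mul _).const_mul _
  -- rewrite Fn as product with geometric partial sum
  have hprod : ∀ n, ∀ p : ℝ, Fn n p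
      = (2 * (Real.sin (p*lam)/p * Real.exp (-(s*p)))) *
          ∑ k ∈ Finset.range n, (-Real.exp (-p))^k := by
    intro n p
    rw [hFn, Finset.mul_sum]
    refine Finset.sum_congr rfl fun k _ => ?_
    have : Real.exp (-((s + k)*p)) = Real.exp (-(s*p)) * (Real.exp (-p))^k := by
      rw [← Real.exp_nat_mul, ← Real.exp_add]; ring_nf
    rw [this, neg_pow (Real.exp (-p))]
    ring
  have key := MeasureTheory.tendsto_integral_of_dominated_convergence
    (μ := volume.restrict (Set.Ioi (0:ℝ))) (F := Fn)
    (f := fun p => Real.sin (p*lam)/p * (Real.exp (-(r*p/2)) / Real.cosh (p/2)))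
    (bound := fun p => 4 * |lam| * Real.exp (-(s*p)))
    (fun n => by
      refine Finset.aestronglyMeasurable_fun_sum _ fun k _ => ?_
      exact (((((Real.measurable_sin.comp (measurable_id.mul_const lam)).div measurable_id).mul
        (Real.measurable_exp.comp ((measurable_const.mul measurable_id).neg))).const_mul
        2).const_mul ((-1:ℝ)^k)).aestronglyMeasurable)
    (by simpa [neg_mul, mul_assoc] using
      ((exp_neg_integrableOn_Ioi 0 hs0).const_mul (4 * |lam|)))
    ?_ ?_
  · convert key using 2
    exact (hFnint _).symm
  · -- bound
    intro n
    filter_upwards [ae_restrict_mem measurableSet_Ioi] with p hp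
    have hp0 : (0:ℝ) < p := hp
    rw [hprod n p, norm_mul]
    have h1 : ‖2 * (Real.sin (p*lam)/p * Real.exp (-(s*p)))‖ ≤ 2 * |lam| * Real.exp (-(s*p)) := by
      rw [Real.norm_eq_abs, abs_mul, abs_mul, abs_div, abs_of_pos hp0,
        abs_of_pos (Real.exp_pos _)]
      have h1 : |Real.sin (p*lam)| ≤ p * |lam| := by
        have := Real.abs_sin_le_abs (x := p*lam)
        rwa [abs_mul, abs_of_pos hp0] at this
      have : |Real.sin (p*lam)| / p ≤ |lam| := by
        rw [div_le_iff₀ hp0]; linarith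
      have h2 : |(2:ℝ)| = 2 := by norm_num
      rw [h2]
      nlinarith [Real.exp_pos (-(s*p)), abs_nonneg (Real.sin (p*lam)), this]
    have h2 : ‖∑ k ∈ Finset.range n, (-Real.exp (-p))^k‖ ≤ 2 := by
      have hx1 : (-Real.exp (-p)) ≠ 1 := by
        have := Real.exp_pos (-p); linarith
      rw [geom_sum_eq hx1, Real.norm_eq_abs, abs_div]
      have hd : |(-Real.exp (-p)) - 1| = 1 + Real.exp (-p) := by
        rw [abs_of_neg (by linarith [Real.exp_pos (-p)])]; ring
      rw [hd]
      have hnum : |(-Real.exp (-p))^n - 1| ≤ 2 := by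
        have h3 : |(-Real.exp (-p))^n| ≤ 1 := by
          rw [_root_.abs_pow, abs_neg, abs_of_pos (Real.exp_pos _)]
          exact pow_le_one₀ (Real.exp_pos _).le (Real.exp_le_one_iff.mpr (by linarith))
        calc |(-Real.exp (-p))^n - 1| ≤ |(-Real.exp (-p))^n| + 1 := by simpa using abs_sub ((-Real.exp (-p))^n) 1
          _ ≤ 2 := by linarith
      have hden1 : (1:ℝ) ≤ 1 + Real.exp (-p) := by linarith [Real.exp_pos (-p)]
      have := div_le_self (abs_nonneg ((-Real.exp (-p))^n - 1)) hden1
      linarith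
    calc ‖2 * (Real.sin (p*lam)/p * Real.exp (-(s*p)))‖ * ‖∑ k ∈ Finset.range n, (-Real.exp (-p))^k‖
        ≤ (2 * |lam| * Real.exp (-(s*p))) * 2 :=
          mul_le_mul h1 h2 (norm_nonneg _) (by positivity)
      _ = 4 * |lam| * Real.exp (-(s*p)) := by ring
  · -- pointwise limit
    filter_upwards [ae_restrict_mem measurableSet_Ioi] with p hp
    have hp0 : (0:ℝ) < p := hp
    have hgeo : Tendsto (fun n : ℕ => ∑ k ∈ Finset.range n, (-Real.exp (-p))^k) atTop
        (nhds ((1 - (-Real.exp (-p)))⁻¹)) := by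
      refine (hasSum_geometric_of_abs_lt_one ?_).tendsto_sum_nat
      rw [abs_neg, abs_of_pos (Real.exp_pos _)]
      exact Real.exp_lt_one_iff.mpr (by linarith)
    have hmul := hgeo.const_mul (2 * (Real.sin (p*lam)/p * Real.exp (-(s*p))))
    have heq : (2 * (Real.sin (p*lam)/p * Real.exp (-(s*p)))) * (1 - (-Real.exp (-p)))⁻¹
        = Real.sin (p*lam)/p * (Real.exp (-(r*p/2)) / Real.cosh (p/2)) := by
      have hcosh : Real.cosh (p/2) = (Real.exp (p/2) + Real.exp (-(p/2)))/2 := Real.cosh_eq _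
      have hX : (0:ℝ) < Real.exp (p/2) + Real.exp (-(p/2)) := by positivity
      have hD : (0:ℝ) < 1 + Real.exp (-p) := by linarith [Real.exp_pos (-p)]
      have key2 : Real.exp (-(s*p)) * (Real.exp (p/2) + Real.exp (-(p/2)))
          = Real.exp (-(r*p/2)) * (1 + Real.exp (-p)) := by
        rw [mul_add, mul_add, ← Real.exp_add, ← Real.exp_add, mul_one, ← Real.exp_add]
        congr 2
        · rw [hs]; ring
        · rw [hs]; ring
      rw [hcosh, sub_neg_eq_add]
      field_simp
      rw [mul_comm p s, mul_comm p r]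
      linear_combination (Real.sin (p*lam)) * key2
    rw [← heq]
    exact hmul.congr fun n => (hprod n p).symm

lemma sum_range_two_mul (f : ℕ → ℝ) (m : ℕ) :
    ∑ k ∈ Finset.range (2*m), f k = ∑ j ∈ Finset.range m, (f (2*j) + f (2*j+1)) := by
  induction m with
  | zero => simp
  | succ m ih =>
    rw [Finset.sum_range_succ, ← ih, show 2*(m+1) = (2*m+1)+1 by ring,
      Finset.sum_range_succ, Finset.sum_range_succ]
    ring_nf

lemma sinh_ratio {h p r : ℝ} (hh : 0 < h) (hp : 0 < p) :
    Real.sinh (p/2*(π/h - r)) / Real.sinh (p*π/(2*h))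
      = (Real.exp (-(r*p/2)) - Real.exp (r*p/2) * Real.exp (-(p*π/h)))
          / (1 - Real.exp (-(p*π/h))) := by
  set A := p*π/(2*h) with hA
  have hA0 : 0 < A := by rw [hA]; positivity
  have hX : p/2*(π/h - r) = A - r*p/2 := by rw [hA]; field_simp
  have hE : Real.exp (-(p*π/h)) = (Real.exp A)⁻¹ * (Real.exp A)⁻¹ := by
    rw [← Real.exp_neg, ← Real.exp_add, hA]
    congr 1
    field_simp
    ring
  have heA : 1 < Real.exp A := by nlinarith [Real.add_one_le_exp A]
  have heA0 : Real.exp A ≠ 0 := (Real.exp_pos A).ne'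
  have heB0 : Real.exp (r*p/2) ≠ 0 := (Real.exp_pos _).ne'
  rw [hX, Real.sinh_eq, Real.sinh_eq, Real.exp_sub, neg_sub, Real.exp_sub,
    Real.exp_neg A, Real.exp_neg (r*p/2), hE]
  have hd1 : Real.exp A - (Real.exp A)⁻¹ ≠ 0 := by
    have : (Real.exp A)⁻¹ < 1 := by
      rw [inv_lt_one_iff₀]; right; exact heA
    nlinarith
  have hd2 : 1 - (Real.exp A)⁻¹ * (Real.exp A)⁻¹ ≠ 0 := by
    have h1 : (Real.exp A)⁻¹ < 1 := by rw [inv_lt_one_iff₀]; right; exact heA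
    have h2 : 0 < (Real.exp A)⁻¹ := by positivity
    nlinarith
  generalize hgu : Real.exp A = u at hd1 hd2 heA heA0 hE ⊢
  generalize hgv : Real.exp (r*p/2) = v at heB0 ⊢
  have hu0 : 0 < u := by linarith
  have hd3 : -(u*v*2) + u^3*v*2 ≠ 0 := by
    have he : -(u*v*2) + u^3*v*2 = (2*u*(u^2-1))*v := by ring
    rw [he]
    have h5 : (0:ℝ) < 2*u*(u^2-1) := mul_pos (by positivity) (by nlinarith)
    exact mul_ne_zero h5.ne' heB0
  have hd4 : -(u^2*v) + u^4*v ≠ 0 := by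
    have he : -(u^2*v) + u^4*v = (u^2*(u^2-1))*v := by ring
    rw [he]
    have h5 : (0:ℝ) < u^2*(u^2-1) := mul_pos (by positivity) (by nlinarith)
    exact mul_ne_zero h5.ne' heB0
  have hd1' : (u - u⁻¹)/2 ≠ 0 := div_ne_zero hd1 two_ne_zero
  rw [div_eq_div_iff hd1' hd2]
  field_simp

lemma sinh_ratio_le {A B : ℝ} (hA : 0 < A) (hB : 0 ≤ B) :
    Real.sinh (A - B) ≤ Real.exp (-B) * Real.sinh A := by
  have h1 : 1 ≤ Real.exp B := Real.one_le_exp hB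
  have h2 : 0 < Real.exp A := Real.exp_pos A
  have h3 : 0 < Real.exp B := Real.exp_pos B
  rw [Real.sinh_eq, Real.sinh_eq, Real.exp_sub, neg_sub, Real.exp_sub, Real.exp_neg B,
    Real.exp_neg A]
  rw [div_le_iff₀ (by norm_num : (0:ℝ) < 2)]
  have key : Real.exp B - (Real.exp B)⁻¹ ≥ 0 := by
    have : (Real.exp B)⁻¹ ≤ 1 := by
      rw [inv_le_one_iff₀]; right; exact h1
    linarith [inv_pos.mpr h3]
  have h4 : 1 ≤ Real.exp B * Real.exp B := by nlinarith
  field_simp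
  nlinarith [mul_pos h2 h3, h4, mul_pos (mul_pos h2 h2) (mul_pos h3 h3),
    mul_le_mul_of_nonneg_left h4 (le_of_lt (mul_pos (mul_pos h2 h2) h3))]

lemma stepA {r : ℝ} (hr : 0 < r) (lam : ℝ) :
    Tendsto (fun h : ℝ => ∫ p in Set.Ioi (0:ℝ),
        Real.sin (p * lam) / p *
          (Real.sinh (p / 2 * (π / h - r)) /
            (Real.cosh (p / 2) * Real.sinh (p * π / (2 * h)))))
      (nhdsWithin 0 (Set.Ioi 0))
      (nhds (∫ p in Set.Ioi (0:ℝ),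
        Real.sin (p*lam)/p * (Real.exp (-(r*p/2)) / Real.cosh (p/2)))) := by
  have hπr : 0 < π/r := by positivity
  apply tendsto_integral_filter_of_dominated_convergence
    (bound := fun p => |lam| * Real.exp (-(r*p/2)))
  · -- measurability
    filter_upwards with h
    exact (((Real.measurable_sin.comp (measurable_id.mul_const lam)).div measurable_id).mul
      ((Real.measurable_sinh.comp ((measurable_id.div_const 2).mul_const (π/h - r))).div
        ((Real.measurable_cosh.comp (measurable_id.div_const 2)).mul
          (Real.measurable_sinh.comp ((measurable_id.mul_const π).div_const
            (2*h)))))).aestronglyMeasurable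
  · -- bound
    filter_upwards [Ioo_mem_nhdsGT hπr] with h hh
    filter_upwards [ae_restrict_mem measurableSet_Ioi] with p hp
    have hp0 : (0:ℝ) < p := hp
    have hh0 : (0:ℝ) < h := hh.1
    set A := p*π/(2*h) with hA
    set B := r*p/2 with hB
    have hA0 : 0 < A := by rw [hA]; positivity
    have hB0 : 0 < B := by rw [hB]; positivity
    have hX : p/2*(π/h - r) = A - B := by rw [hA, hB]; field_simp
    have hrh : r < π/h := by
      rw [lt_div_iff₀ hh0]
      calc r * h < r * (π/r) := by
            exact mul_lt_mul_of_pos_left hh.2 hr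
        _ = π := by field_simp
    have hAB : 0 ≤ A - B := by
      rw [← hX]
      have : 0 ≤ π/h - r := by linarith
      positivity
    have hsA : 0 < Real.sinh A := Real.sinh_pos_iff.mpr hA0
    have hcosh : 1 ≤ Real.cosh (p/2) := Real.one_le_cosh _
    have hcosh0 : 0 < Real.cosh (p/2) := lt_of_lt_of_le one_pos hcosh
    have hsX : 0 ≤ Real.sinh (A - B) := Real.sinh_nonneg_iff.mpr hAB
    have hkey : Real.sinh (A - B) ≤ Real.exp (-B) * Real.sinh A := sinh_ratio_le hA0 hB0.le
    have hfac : Real.sinh (A-B) / (Real.cosh (p/2) * Real.sinh A) ≤ Real.exp (-B) := by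
      rw [div_le_iff₀ (by positivity)]
      calc Real.sinh (A-B) ≤ Real.exp (-B) * Real.sinh A := hkey
        _ ≤ Real.exp (-B) * (Real.cosh (p/2) * Real.sinh A) := by
            nlinarith [Real.exp_pos (-B)]
    have hfac0 : 0 ≤ Real.sinh (A-B) / (Real.cosh (p/2) * Real.sinh A) := by positivity
    have hsin : |Real.sin (p*lam) / p| ≤ |lam| := by
      rw [abs_div, abs_of_pos hp0, div_le_iff₀ hp0]
      have := Real.abs_sin_le_abs (x := p*lam)
      rwa [abs_mul, abs_of_pos hp0, mul_comm p (|lam|)] at this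
    rw [Real.norm_eq_abs, hX, abs_mul]
    rw [_root_.abs_of_nonneg hfac0]
    rw [hB] at hfac ⊢
    exact mul_le_mul hsin hfac hfac0 (abs_nonneg lam)
  · -- bound integrable
    have hr2 : (0:ℝ) < r/2 := by linarith
    have h0 : IntegrableOn (fun x => |lam| * Real.exp (-(r/2) * x)) (Set.Ioi (0:ℝ)) :=
      (exp_neg_integrableOn_Ioi 0 hr2).const_mul |lam|
    refine h0.congr_fun (fun p _ => ?_) measurableSet_Ioi
    dsimp only; rw [show -(r/2)*p = -(r*p/2) by ring]
  · -- pointwise limit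
    filter_upwards [ae_restrict_mem measurableSet_Ioi] with p hp
    have hp0 : (0:ℝ) < p := hp
    have hT : Tendsto (fun h : ℝ => Real.exp (-(p*π/h))) (nhdsWithin 0 (Set.Ioi 0)) (nhds 0) := by
      apply Real.tendsto_exp_atBot.comp
      apply tendsto_neg_atBot_iff.mpr
      have h1 : Tendsto (fun h : ℝ => h⁻¹) (nhdsWithin 0 (Set.Ioi 0)) atTop :=
        tendsto_inv_nhdsGT_zero
      have := h1.const_mul_atTop (by positivity : (0:ℝ) < p*π)
      exact this.congr fun h => by rw [div_eq_mul_inv]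
    have hphi : Tendsto (fun t : ℝ =>
        (Real.exp (-(r*p/2)) - Real.exp (r*p/2) * t)/(1 - t)) (nhds 0)
        (nhds (Real.exp (-(r*p/2)))) := by
      have h1 : Tendsto (fun t : ℝ => Real.exp (-(r*p/2)) - Real.exp (r*p/2) * t) (nhds 0)
          (nhds (Real.exp (-(r*p/2)))) := by
        have := ((continuous_id.tendsto (0:ℝ)).const_mul (Real.exp (r*p/2)))
        have h2 := tendsto_const_nhds (α := ℝ) (x := Real.exp (-(r*p/2))) (f := nhds (0:ℝ)) |>.sub this
        simpa using h2
      have h2 : Tendsto (fun t : ℝ => 1 - t) (nhds (0:ℝ)) (nhds 1) := by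
        have := tendsto_const_nhds (α := ℝ) (x := (1:ℝ)) (f := nhds (0:ℝ)) |>.sub (continuous_id.tendsto (0:ℝ))
        simpa using this
      have := h1.div h2 (by norm_num)
      simpa [Pi.div_def] using this
    have hcomp := hphi.comp hT
    have hfinal := (hcomp.div_const (Real.cosh (p/2))).const_mul (Real.sin (p*lam)/p)
    apply Tendsto.congr' _ hfinal
    filter_upwards [self_mem_nhdsWithin] with h hh
    have hh0 : 0 < h := hh
    have hratio := sinh_ratio (r := r) hh0 hp0
    congr 1
    rw [Function.comp_apply, ← hratio, div_div,
      mul_comm (Real.sinh (p*π/(2*h))) (Real.cosh (p/2))]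


lemma gamma_ratio_eq {r : ℝ} (lam : ℝ) (hr : 0 < r) :
    Complex.Gamma (-Complex.I * lam / 2 + (r + 3) / 4) *
          Complex.Gamma (Complex.I * lam / 2 + (r + 1) / 4) /
        (Complex.Gamma (Complex.I * lam / 2 + (r + 3) / 4) *
          Complex.Gamma (-Complex.I * lam / 2 + (r + 1) / 4))
      = Complex.exp
          (((-(∫ p in Set.Ioi (0:ℝ),
              Real.sin (p*lam)/p * (Real.exp (-(r*p/2)) / Real.cosh (p/2))) : ℝ) : ℂ)
            * Complex.I) := by
  set x1 : ℝ := (r+3)/4 with hx1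
  set x2 : ℝ := (r+1)/4 with hx2
  set y : ℝ := lam/2 with hy
  set a : ℂ := -Complex.I * lam / 2 + (r + 3) / 4 with hadef
  set b : ℂ := Complex.I * lam / 2 + (r + 1) / 4 with hbdef
  set c : ℂ := Complex.I * lam / 2 + (r + 3) / 4 with hcdef
  set d : ℂ := -Complex.I * lam / 2 + (r + 1) / 4 with hddef
  have ha : a = (x1 : ℂ) + (-y : ℝ) * Complex.I := by rw [hadef, hx1, hy]; push_cast; ring
  have hb : b = (x2 : ℂ) + (y : ℝ) * Complex.I := by rw [hbdef, hx2, hy]; push_cast; ring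
  have hc : c = (x1 : ℂ) + (y : ℝ) * Complex.I := by rw [hcdef, hx1, hy]; push_cast; ring
  have hd : d = (x2 : ℂ) + (-y : ℝ) * Complex.I := by rw [hddef, hx2, hy]; push_cast; ring
  have hx1p : 0 < x1 := by rw [hx1]; linarith
  have hx2p : 0 < x2 := by rw [hx2]; linarith
  have hare : a.re = x1 := by rw [ha]; simp
  have haim : a.im = -y := by rw [ha]; simp
  have hbre : b.re = x2 := by rw [hb]; simp
  have hbim : b.im = y := by rw [hb]; simp
  have hconj_a : (starRingEnd ℂ) a = c := by
    rw [ha, hc, map_add, map_mul, Complex.conj_ofReal, Complex.conj_ofReal, Complex.conj_I]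
    push_cast; ring
  have hconj_b : (starRingEnd ℂ) b = d := by
    rw [hb, hd, map_add, map_mul, Complex.conj_ofReal, Complex.conj_ofReal, Complex.conj_I]
    push_cast; ring
  -- nonvanishing of Gamma values
  have hGne : ∀ z : ℂ, 0 < z.re → Complex.Gamma z ≠ 0 := by
    intro z hz
    apply Complex.Gamma_ne_zero
    intro m hm
    rw [hm] at hz
    simp only [Complex.neg_re, Complex.natCast_re] at hz
    have : (0:ℝ) ≤ m := Nat.cast_nonneg m
    linarith
  have hcre : c.re = x1 := by rw [hc]; simp
  have hdre : d.re = x2 := by rw [hd]; simp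
  have hΓcd : Complex.Gamma c * Complex.Gamma d ≠ 0 :=
    mul_ne_zero (hGne c (by rw [hcre]; exact hx1p)) (hGne d (by rw [hdre]; exact hx2p))
  -- GammaSeq limit
  have hGtend : Tendsto (fun n => Complex.GammaSeq a n * Complex.GammaSeq b n /
      (Complex.GammaSeq c n * Complex.GammaSeq d n)) atTop
      (nhds (Complex.Gamma a * Complex.Gamma b / (Complex.Gamma c * Complex.Gamma d))) :=
    ((Complex.GammaSeq_tendsto_Gamma a).mul (Complex.GammaSeq_tendsto_Gamma b)).div
      ((Complex.GammaSeq_tendsto_Gamma c).mul (Complex.GammaSeq_tendsto_Gamma d)) hΓcd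
  -- the partial sums
  set S : ℕ → ℝ := fun m => ∑ k ∈ Finset.range m,
    (-1:ℝ)^k * (2 * Real.arctan (lam/((r+1)/2 + k))) with hS
  -- step: product identity for n ≥ 1
  have hprod : ∀ n : ℕ, 1 ≤ n → Complex.GammaSeq a n * Complex.GammaSeq b n /
      (Complex.GammaSeq c n * Complex.GammaSeq d n)
      = Complex.exp (((-(S (2*(n+1))) : ℝ) : ℂ) * Complex.I) := by
    intro n hn
    have hn0 : (n:ℂ) ≠ 0 := Nat.cast_ne_zero.mpr (by omega)
    have hfac : (n.factorial : ℂ) ≠ 0 := Nat.cast_ne_zero.mpr (Nat.factorial_ne_zero n)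
    have hre_pos : ∀ (z : ℂ), 0 < z.re → ∀ j : ℕ, 0 < (z + j).re := by
      intro z hz j
      simp only [Complex.add_re, Complex.natCast_re]
      have : (0:ℝ) ≤ j := Nat.cast_nonneg j
      linarith
    have hne : ∀ (z : ℂ), 0 < z.re → ∀ j : ℕ, z + j ≠ 0 := by
      intro z hz j h0
      have := hre_pos z hz j
      rw [h0] at this; simp at this
    have hPa : (∏ j ∈ Finset.range (n+1), (a + j)) ≠ 0 :=
      Finset.prod_ne_zero_iff.mpr fun j _ => hne a (by rw [hare]; exact hx1p) j
    have hPb : (∏ j ∈ Finset.range (n+1), (b + j)) ≠ 0 :=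
      Finset.prod_ne_zero_iff.mpr fun j _ => hne b (by rw [hbre]; exact hx2p) j
    have hPc : (∏ j ∈ Finset.range (n+1), (c + j)) ≠ 0 :=
      Finset.prod_ne_zero_iff.mpr fun j _ => hne c (by rw [hcre]; exact hx1p) j
    have hPd : (∏ j ∈ Finset.range (n+1), (d + j)) ≠ 0 :=
      Finset.prod_ne_zero_iff.mpr fun j _ => hne d (by rw [hdre]; exact hx2p) j
    have hpowa : (n:ℂ) ^ a ≠ 0 := by
      simp [Complex.cpow_eq_zero_iff, hn0]
    have hpowb : (n:ℂ) ^ b ≠ 0 := by simp [Complex.cpow_eq_zero_iff, hn0]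
    have hpowc : (n:ℂ) ^ c ≠ 0 := by simp [Complex.cpow_eq_zero_iff, hn0]
    have hpowd : (n:ℂ) ^ d ≠ 0 := by simp [Complex.cpow_eq_zero_iff, hn0]
    have habcd : a + b = c + d := by rw [ha, hb, hc, hd]; push_cast; ring
    have hpow : (n:ℂ) ^ a * (n:ℂ) ^ b = (n:ℂ) ^ c * (n:ℂ) ^ d := by
      rw [← Complex.cpow_add _ _ hn0, ← Complex.cpow_add _ _ hn0, habcd]
    -- ratio equals product of conjugate quotients
    have hratio : Complex.GammaSeq a n * Complex.GammaSeq b n /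
        (Complex.GammaSeq c n * Complex.GammaSeq d n)
        = (∏ j ∈ Finset.range (n+1), (c + j)) * (∏ j ∈ Finset.range (n+1), (d + j)) /
          ((∏ j ∈ Finset.range (n+1), (a + j)) * (∏ j ∈ Finset.range (n+1), (b + j))) := by
      simp only [Complex.GammaSeq]
      have hN : (n:ℂ)^a * n.factorial * ((n:ℂ)^b * n.factorial)
          = (n:ℂ)^c * n.factorial * ((n:ℂ)^d * n.factorial) := by
        linear_combination ((n.factorial : ℂ) * (n.factorial : ℂ)) * hpow
      rw [div_mul_div_comm, div_mul_div_comm, hN, div_div_div_comm,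
        div_self (mul_ne_zero (mul_ne_zero hpowc hfac) (mul_ne_zero hpowd hfac)), one_div_div]
    rw [hratio]
    -- turn into a product of unit factors
    have hfactor : (∏ j ∈ Finset.range (n+1), (c + j)) * (∏ j ∈ Finset.range (n+1), (d + j)) /
          ((∏ j ∈ Finset.range (n+1), (a + j)) * (∏ j ∈ Finset.range (n+1), (b + j)))
        = ∏ j ∈ Finset.range (n+1),
            (((starRingEnd ℂ) (a + j)) / (a + j)) * (((starRingEnd ℂ) (b + j)) / (b + j)) := by
      rw [Finset.prod_mul_distrib, Finset.prod_div_distrib, Finset.prod_div_distrib]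
      have h1 : ∀ j : ℕ, (starRingEnd ℂ) (a + j) = c + j := fun j => by
        rw [map_add, hconj_a]; simp
      have h2 : ∀ j : ℕ, (starRingEnd ℂ) (b + j) = d + j := fun j => by
        rw [map_add, hconj_b]; simp
      rw [Finset.prod_congr rfl (fun j _ => h1 j), Finset.prod_congr rfl (fun j _ => h2 j)]
      rw [div_mul_div_comm]
    rw [hfactor]
    -- each factor is an exponential
    have hfac_exp : ∀ j : ℕ,
        (((starRingEnd ℂ) (a + j)) / (a + j)) * (((starRingEnd ℂ) (b + j)) / (b + j))
        = Complex.exp (((-2 * Real.arctan ((-y)/(x1 + j)) + -2 * Real.arctan (y/(x2 + j)) : ℝ) : ℂ)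
            * Complex.I) := by
      intro j
      have hra : (a + j).re = x1 + j := by simp [hare]
      have hia : (a + j).im = -y := by simp [haim]
      have hrb : (b + j).re = x2 + j := by simp [hbre]
      have hib : (b + j).im = y := by simp [hbim]
      have hrap : 0 < (a + j).re := by rw [hra]; positivity
      have hrbp : 0 < (b + j).re := by rw [hrb]; positivity
      rw [conj_div_exp hrap, conj_div_exp hrbp, ← Complex.exp_add, hra, hia, hrb, hib]
      congr 1
      push_cast
      ring
    rw [Finset.prod_congr rfl (fun j _ => hfac_exp j), ← Complex.exp_sum]
    have hsum : ∀ j : ℕ, (-2 * Real.arctan ((-y)/(x1 + j)) + -2 * Real.arctan (y/(x2 + j)) : ℝ)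
        = -(((-1:ℝ)^(2*j) * (2 * Real.arctan (lam/((r+1)/2 + (2*j : ℕ))))
            + (-1:ℝ)^(2*j+1) * (2 * Real.arctan (lam/((r+1)/2 + (2*j+1 : ℕ)))))) := by
      intro j
      have hj1 : Real.arctan ((-y)/(x1 + j)) = -Real.arctan (lam/((r+1)/2 + (2*j+1 : ℕ))) := by
        rw [neg_div, Real.arctan_neg]
        congr 2
        have hd1 : (x1 + (j:ℝ)) ≠ 0 := by
          have : (0:ℝ) ≤ (j:ℝ) := Nat.cast_nonneg j
          nlinarith
        have hd2 : ((r+1)/2 + ((2*j+1 : ℕ) : ℝ)) ≠ 0 := by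
          have : (0:ℝ) ≤ ((2*j+1 : ℕ) : ℝ) := Nat.cast_nonneg _
          nlinarith
        rw [div_eq_div_iff hd1 hd2, hy, hx1]
        push_cast
        ring
      have hj2 : Real.arctan (y/(x2 + j)) = Real.arctan (lam/((r+1)/2 + (2*j : ℕ))) := by
        congr 1
        have hd1 : (x2 + (j:ℝ)) ≠ 0 := by
          have : (0:ℝ) ≤ (j:ℝ) := Nat.cast_nonneg j
          nlinarith
        have hd2 : ((r+1)/2 + ((2*j : ℕ) : ℝ)) ≠ 0 := by
          have : (0:ℝ) ≤ ((2*j : ℕ) : ℝ) := Nat.cast_nonneg _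
          nlinarith
        rw [div_eq_div_iff hd1 hd2, hy, hx2]
        push_cast
        ring
      rw [hj1, hj2]
      have e1 : (-1:ℝ)^(2*j) = 1 := by
        rw [pow_mul]; norm_num
      have e2 : (-1:ℝ)^(2*j+1) = -1 := by
        rw [pow_succ, e1]; norm_num
      rw [e1, e2]
      ring
    have hreal : ∑ j ∈ Finset.range (n+1),
        (-2 * Real.arctan ((-y)/(x1 + j)) + -2 * Real.arctan (y/(x2 + j))) = -(S (2*(n+1))) := by
      rw [Finset.sum_congr rfl (fun j _ => hsum j)]
      simp only [hS]
      rw [sum_range_two_mul (fun k => (-1:ℝ)^k * (2 * Real.arctan (lam/((r+1)/2 + k)))) (n+1)]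
      rw [← Finset.sum_neg_distrib]
    calc Complex.exp (∑ j ∈ Finset.range (n+1),
          (((-2 * Real.arctan ((-y)/(x1 + j)) + -2 * Real.arctan (y/(x2 + j)) : ℝ) : ℂ)
            * Complex.I))
        = Complex.exp (((∑ j ∈ Finset.range (n+1),
            (-2 * Real.arctan ((-y)/(x1 + j)) + -2 * Real.arctan (y/(x2 + j))) : ℝ) : ℂ)
              * Complex.I) := by
          rw [← Finset.sum_mul]
          norm_cast
      _ = _ := by rw [hreal]
  set I0 : ℝ := ∫ p in Set.Ioi (0:ℝ),
      Real.sin (p*lam)/p * (Real.exp (-(r*p/2)) / Real.cosh (p/2)) with hI0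
  have hmono : Tendsto (fun n : ℕ => 2*(n+1)) atTop atTop :=
    tendsto_atTop_mono (fun n => by simp only [id_eq]; omega) tendsto_id
  have hStend : Tendsto (fun n : ℕ => S (2*(n+1))) atTop (nhds I0) :=
    (series_to_integral hr lam).comp hmono
  have hcont : Continuous (fun x : ℝ => Complex.exp (((-x : ℝ) : ℂ) * Complex.I)) :=
    Complex.continuous_exp.comp ((Complex.continuous_ofReal.comp continuous_neg).mul
      continuous_const)
  have hexp_tend : Tendsto (fun n : ℕ => Complex.exp (((-(S (2*(n+1))) : ℝ) : ℂ) * Complex.I))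
      atTop (nhds (Complex.exp (((-I0 : ℝ) : ℂ) * Complex.I))) :=
    (hcont.tendsto I0).comp hStend
  have hG2 : Tendsto (fun n => Complex.GammaSeq a n * Complex.GammaSeq b n /
      (Complex.GammaSeq c n * Complex.GammaSeq d n)) atTop
      (nhds (Complex.exp (((-I0 : ℝ) : ℂ) * Complex.I))) := by
    apply Tendsto.congr' _ hexp_tend
    filter_upwards [eventually_ge_atTop 1] with n hn
    exact (hprod n hn).symm
  exact tendsto_nhds_unique hGtend hG2

/-- The function K_r^{(h)}(λ) defined by the integral formula. -/
noncomputable def Kfun (h r lam : ℝ) : ℂ :=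
  Complex.exp (-Complex.I *
    ((∫ p in Set.Ioi (0 : ℝ),
        Real.sin (p * lam) / p *
          (Real.sinh (p / 2 * (π / h - r)) /
            (Real.cosh (p / 2) * Real.sinh (p * π / (2 * h)))) : ℝ) : ℂ))

theorem Kfun_limit (r lam : ℝ) (hr : 0 < r) :
    Filter.Tendsto (fun h : ℝ => Kfun h r lam) (nhdsWithin 0 (Set.Ioi 0))
      (nhds (Complex.Gamma (-Complex.I * lam / 2 + (r + 3) / 4) *
          Complex.Gamma (Complex.I * lam / 2 + (r + 1) / 4) /
        (Complex.Gamma (Complex.I * lam / 2 + (r + 3) / 4) *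
          Complex.Gamma (-Complex.I * lam / 2 + (r + 1) / 4)))) := by
  rw [gamma_ratio_eq lam hr]
  have hA := stepA hr lam
  have hcont : Continuous (fun x : ℝ => Complex.exp (-Complex.I * (x : ℂ))) :=
    Complex.continuous_exp.comp (continuous_const.mul Complex.continuous_ofReal)
  have hcomp := (hcont.tendsto _).comp hA
  have heq : -Complex.I * ((∫ p in Set.Ioi (0:ℝ),
        Real.sin (p*lam)/p * (Real.exp (-(r*p/2)) / Real.cosh (p/2)) : ℝ) : ℂ)
      = (((-(∫ p in Set.Ioi (0:ℝ),
          Real.sin (p*lam)/p * (Real.exp (-(r*p/2)) / Real.cosh (p/2))) : ℝ)) : ℂ)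
          * Complex.I := by
    push_cast
    ring
  rw [← heq]
  exact hcomp.congr fun h => rfl
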